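/- arXiv:1310.4939 — 2 statements merged into one kernel-verified Lean document; each statement's English description precedes it below -/
import Mathlib

section
/- Let f, g, h : X^n → ℝ be arbitrary functions on a finite set X^n, let a ≥ 0 and b ≥ 0, and define Ω* = {x : f(x) + a·g(x) ≤ b·h(x)}. If Ω ⊆ X^n satisfies ∑_{x∈Ω} g(x) ≤ ∑_{x∈Ω*} g(x) and ∑_{x∈Ωᶜ} h(x) ≤ ∑_{x∈(Ω*)ᶜ} h(x), then ∑_{x∈Ω*} f(x) ≤ ∑_{x∈Ω} f(x). -/
open Finset

theorem extended_neyman_pearson {X : Type*} [Fintype X] [DecidableEq X]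
    (f g h : X → ℝ) (a b : ℝ) (ha : 0 ≤ a) (hb : 0 ≤ b)
    (Ωstar : Finset X) (hΩstar : Ωstar = univ.filter (fun x => f x + a * g x ≤ b * h x))
    (Ω : Finset X)
    (hg : ∑ x ∈ Ω, g x ≤ ∑ x ∈ Ωstar, g x)
    (hh : ∑ x ∈ Ωᶜ, h x ≤ ∑ x ∈ Ωstarᶜ, h x) :
    ∑ x ∈ Ωstar, f x ≤ ∑ x ∈ Ω, f x := by
  set φ : X → ℝ := fun x => f x + a * g x - b * h x with hφ
  have hmem : ∀ x, x ∈ Ωstar ↔ φ x ≤ 0 := by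
    intro x
    simp [hΩstar, hφ, sub_nonpos]
  have h1 : ∑ x ∈ Ωstar \ Ω, φ x ≤ 0 :=
    Finset.sum_nonpos (fun x hx => (hmem x).1 (Finset.mem_sdiff.1 hx).1)
  have h2 : (0:ℝ) ≤ ∑ x ∈ Ω \ Ωstar, φ x := by
    apply Finset.sum_nonneg
    intro x hx
    have := (Finset.mem_sdiff.1 hx).2
    have := (hmem x).not.1 this
    linarith [not_le.1 this]
  have e1 : ∑ x ∈ Ωstar, φ x = ∑ x ∈ Ωstar ∩ Ω, φ x + ∑ x ∈ Ωstar \ Ω, φ x :=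
    (Finset.sum_inter_add_sum_sdiff Ωstar Ω φ).symm
  have e2 : ∑ x ∈ Ω, φ x = ∑ x ∈ Ω ∩ Ωstar, φ x + ∑ x ∈ Ω \ Ωstar, φ x :=
    (Finset.sum_inter_add_sum_sdiff Ω Ωstar φ).symm
  have e3 : Ωstar ∩ Ω = Ω ∩ Ωstar := Finset.inter_comm _ _
  have key : ∑ x ∈ Ωstar, φ x ≤ ∑ x ∈ Ω, φ x := by
    rw [e1, e2, e3]; linarith
  have hhu1 : ∑ x ∈ Ωstar, h x + ∑ x ∈ Ωstarᶜ, h x = ∑ x, h x :=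
    Finset.sum_add_sum_compl Ωstar h
  have hhu2 : ∑ x ∈ Ω, h x + ∑ x ∈ Ωᶜ, h x = ∑ x, h x :=
    Finset.sum_add_sum_compl Ω h
  have hh' : ∑ x ∈ Ωstar, h x ≤ ∑ x ∈ Ω, h x := by linarith
  have expand : ∀ S : Finset X, ∑ x ∈ S, φ x
      = ∑ x ∈ S, f x + a * ∑ x ∈ S, g x - b * ∑ x ∈ S, h x := by
    intro S
    simp [hφ, Finset.sum_add_distrib, Finset.sum_sub_distrib, Finset.mul_sum]
  rw [expand Ωstar, expand Ω] at key
  have hag : a * ∑ x ∈ Ω, g x ≤ a * ∑ x ∈ Ωstar, g x :=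
    mul_le_mul_of_nonneg_left hg ha
  have hbh : b * ∑ x ∈ Ωstar, h x ≤ b * ∑ x ∈ Ω, h x :=
    mul_le_mul_of_nonneg_left hh' hb
  linarith
end

section
/- Let P be a probability distribution on a finite set Ω with P(x) > 0 for all x, and let θ > 0. Among all length functions L : Ω → ℝ≥0 satisfying Kraft's inequality ∑_{x∈Ω} 2^{−L(x)} ≤ 1 (ignoring integer constraints), the minimum of ∑_{x∈Ω} P(x)·2^{θL(x)} is achieved by L*(x) = −log₂( P(x)^{1/(1+θ)} / ∑_{x'∈Ω} P(x')^{1/(1+θ)} ), and the minimum value equals ( ∑_{x∈Ω} P(x)^{1/(1+θ)} )^{1+θ}. -/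
open Finset

/-- Optimal length function for the exponential-moment criterion, subject to
Kraft's inequality (non-integer lengths allowed). -/
theorem optimal_length_exponential_moment {Ω : Type*} [Fintype Ω] [Nonempty Ω]
    (P : Ω → ℝ) (hP : ∀ x, 0 < P x) (hsum : ∑ x, P x = 1)
    (θ : ℝ) (hθ : 0 < θ)
    (Lstar : Ω → ℝ)
    (hLstar : Lstar = fun x =>
      - Real.logb 2 (P x ^ (1 / (1 + θ)) / ∑ x', P x' ^ (1 / (1 + θ)))) :
    (∀ x, 0 ≤ Lstar x) ∧
    (∑ x, (2 : ℝ) ^ (-(Lstar x)) ≤ 1) ∧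
    (∑ x, P x * (2 : ℝ) ^ (θ * Lstar x) = (∑ x, P x ^ (1 / (1 + θ))) ^ (1 + θ)) ∧
    (∀ L : Ω → ℝ, (∀ x, 0 ≤ L x) → ∑ x, (2 : ℝ) ^ (-(L x)) ≤ 1 →
      (∑ x, P x ^ (1 / (1 + θ))) ^ (1 + θ) ≤ ∑ x, P x * (2 : ℝ) ^ (θ * L x)) := by
  have h1θ : (0:ℝ) < 1 + θ := by linarith
  set q : Ω → ℝ := fun x => P x ^ (1 / (1 + θ)) with hq
  set S : ℝ := ∑ x, q x with hS
  have hqpos : ∀ x, 0 < q x := fun x => Real.rpow_pos_of_pos (hP x) _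
  have hSpos : 0 < S := Finset.sum_pos (fun x _ => hqpos x) Finset.univ_nonempty
  have hqS : ∀ x, q x ≤ S := fun x =>
    Finset.single_le_sum (f := q) (fun y _ => (hqpos y).le) (Finset.mem_univ x)
  have hdivpos : ∀ x, 0 < q x / S := fun x => div_pos (hqpos x) hSpos
  have hkey : ∀ x, (2:ℝ) ^ (-(Lstar x)) = q x / S := by
    intro x
    rw [hLstar]
    simp only [neg_neg]
    exact Real.rpow_logb (by norm_num) (by norm_num) (hdivpos x)
  have hLform : ∀ x, Lstar x = Real.logb 2 (S / q x) := by
    intro x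
    rw [hLstar]
    simp only
    rw [← Real.logb_inv, inv_div]
  have hpow : ∀ x, (2:ℝ) ^ (θ * Lstar x) = (S / q x) ^ θ := by
    intro x
    rw [hLform x, mul_comm, Real.rpow_mul (by norm_num),
      Real.rpow_logb (by norm_num) (by norm_num) (div_pos hSpos (hqpos x))]
  have hPq : ∀ x, P x = q x ^ (1 + θ) := by
    intro x
    rw [hq]
    simp only
    rw [← Real.rpow_mul (hP x).le, one_div_mul_cancel h1θ.ne', Real.rpow_one]
  refine ⟨?_, ?_, ?_, ?_⟩
  · intro x
    rw [hLstar]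
    simp only [neg_nonneg]
    exact Real.logb_nonpos (by norm_num) (hdivpos x).le ((div_le_one hSpos).2 (hqS x))
  · have h1 : ∑ x, (2:ℝ) ^ (-(Lstar x)) = 1 := by
      calc ∑ x, (2:ℝ) ^ (-(Lstar x)) = ∑ x, q x / S := by simp [hkey]
        _ = 1 := by rw [← Finset.sum_div, ← hS, div_self hSpos.ne']
    exact h1.le
  · have : ∀ x, P x * (2:ℝ) ^ (θ * Lstar x) = q x * S ^ θ := by
      intro x
      rw [hpow x, hPq x, Real.div_rpow hSpos.le (hqpos x).le,
        Real.rpow_add (hqpos x), Real.rpow_one]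
      field_simp [(Real.rpow_pos_of_pos (hqpos x) θ).ne']
    calc ∑ x, P x * (2:ℝ) ^ (θ * Lstar x) = ∑ x, q x * S ^ θ := by simp [this]
      _ = S * S ^ θ := by rw [← Finset.sum_mul, ← hS]
      _ = S ^ (1 + θ) := by rw [Real.rpow_add hSpos, Real.rpow_one]
  · intro L hL0 hKraft
    set p : ℝ := 1 + θ with hp
    set p' : ℝ := (1 + θ) / θ with hp'
    have hpq : Real.HolderConjugate p p' := by
      rw [Real.holderConjugate_iff]
      constructor
      · rw [hp]; linarith
      · rw [hp, hp']
        field_simp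
    set f : Ω → ℝ := fun x => (P x * (2:ℝ) ^ (θ * L x)) ^ (1 / (1 + θ)) with hf
    set g : Ω → ℝ := fun x => ((2:ℝ) ^ (-(L x))) ^ (θ / (1 + θ)) with hg
    have hfg : ∀ x, f x * g x = q x := by
      intro x
      rw [hf, hg, hq]
      simp only
      have h2pos : (0:ℝ) < (2:ℝ) ^ (θ * L x) := Real.rpow_pos_of_pos (by norm_num) _
      rw [Real.mul_rpow (hP x).le h2pos.le, ← Real.rpow_mul (by norm_num : (0:ℝ) ≤ 2),
        ← Real.rpow_mul (by norm_num : (0:ℝ) ≤ 2), mul_assoc,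
        ← Real.rpow_add (by norm_num : (0:ℝ) < 2)]
      have : θ * L x * (1 / (1 + θ)) + -(L x) * (θ / (1 + θ)) = 0 := by field_simp; ring
      rw [this, Real.rpow_zero, mul_one]
    have hfnn : ∀ x, 0 ≤ f x := fun x =>
      Real.rpow_nonneg (mul_nonneg (hP x).le (Real.rpow_nonneg (by norm_num) _)) _
    have hgnn : ∀ x, 0 ≤ g x := fun x => Real.rpow_nonneg (Real.rpow_nonneg (by norm_num) _) _
    have hfp : ∀ x, |f x| ^ p = P x * (2:ℝ) ^ (θ * L x) := by
      intro x
      rw [abs_of_nonneg (hfnn x), hf]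
      simp only
      rw [← Real.rpow_mul (mul_nonneg (hP x).le (Real.rpow_nonneg (by norm_num) _)),
        hp, one_div_mul_cancel h1θ.ne', Real.rpow_one]
    have hgp : ∀ x, |g x| ^ p' = (2:ℝ) ^ (-(L x)) := by
      intro x
      rw [abs_of_nonneg (hgnn x), hg]
      simp only
      rw [← Real.rpow_mul (Real.rpow_nonneg (by norm_num) _), hp']
      rw [div_mul_div_comm, mul_comm θ (1+θ), div_self (by positivity), Real.rpow_one]
    have holder := Real.inner_le_Lp_mul_Lq Finset.univ f g hpq
    simp only [hfg, hfp, hgp] at holder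
    have hA : (0:ℝ) ≤ ∑ x, P x * (2:ℝ) ^ (θ * L x) :=
      Finset.sum_nonneg fun x _ => mul_nonneg (hP x).le (Real.rpow_nonneg (by norm_num) _)
    have hBle : (∑ x, (2:ℝ) ^ (-(L x))) ^ (1 / p') ≤ 1 :=
      Real.rpow_le_one (Finset.sum_nonneg fun x _ => Real.rpow_nonneg (by norm_num) _)
        hKraft (by positivity)
    have hSle : S ≤ (∑ x, P x * (2:ℝ) ^ (θ * L x)) ^ (1 / p) := by
      calc S ≤ (∑ x, P x * (2:ℝ) ^ (θ * L x)) ^ (1 / p) * (∑ x, (2:ℝ) ^ (-(L x))) ^ (1 / p') :=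
            holder
        _ ≤ (∑ x, P x * (2:ℝ) ^ (θ * L x)) ^ (1 / p) * 1 :=
            mul_le_mul_of_nonneg_left hBle (Real.rpow_nonneg hA _)
        _ = _ := mul_one _
    have := Real.rpow_le_rpow hSpos.le hSle h1θ.le
    rwa [← Real.rpow_mul hA, one_div_mul_cancel h1θ.ne', Real.rpow_one] at this
end
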